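/- Let M ∈ ℕ and let H, L, U be M×M real matrices and γ : ℕ → ℝ be such that: (i) H_{kj} = γ_k whenever j − k ≥ 4 and j − k is even; (ii) L has unit diagonal and L_{kj} = 0 unless j = k or j = k−2; (iii) L·U = H. Then for all indices k, j < M with j − k ≥ 4 and j − k even (and k+4 < M), U_{kj} = U_{k,k+4}; in particular every row of U contains at most three distinct values U_{k,k}, U_{k,k+2}, U_{k,k+4}, and U_{k,j} = U_{k,k+4} for all even j − k ≥ 6. -/
import Mathlib


/-- Structure of the dense upper factor in the pivot-free LU decomposition of the
Helmholtz coefficient matrix: since every row of `H` is constant (equal to `γ_k`)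
along its even superdiagonal tail from offset 4 on, the upper factor `U` has
constant tails, `U_{kj} = U_{k,k+4}` for all even `j − k ≥ 4`; in particular
each row of `U` contains at most the three distinct values
`U_{k,k}`, `U_{k,k+2}`, `U_{k,k+4}`. -/
theorem helmholtz_LU_upper_structure (M : ℕ)
    (H L U : ℕ → ℕ → ℝ) (γ : ℕ → ℝ)
    -- (i) rows of H are constant along even superdiagonal tails from offset 4
    (hH : ∀ k j, k < M → j < M → k + 4 ≤ j → (j - k) % 2 = 0 → H k j = γ k)
    -- (ii) L is unit lower triangular with nonzeros only on subdiagonal 2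
    (hLdiag : ∀ k, k < M → L k k = 1)
    (hLzero : ∀ k j, k < M → j < M → j ≠ k → k ≠ j + 2 → L k j = 0)
    -- (iii) L·U = H
    (hLU : ∀ k j, k < M → j < M → ∑ i ∈ Finset.range M, L k i * U i j = H k j) :
    ∀ k j, k < M → j < M → k + 4 ≤ j → (j - k) % 2 = 0 → U k j = U k (k + 4) := by
  intro k
  induction k using Nat.strong_induction_on with
  | _ k ih =>
    intro j hkM hjM hle hpar
    have hk4M : k + 4 < M := lt_of_le_of_lt hle hjM
    have hH1 : H k j = γ k := hH k j hkM hjM hle hpar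
    have hH2 : H k (k + 4) = γ k := hH k (k + 4) hkM hk4M le_rfl (by omega)
    rcases Nat.lt_or_ge k 2 with hk2 | hk2
    · -- k < 2 : only the diagonal term survives
      have key : ∀ j', j' < M → U k j' = H k j' := by
        intro j' hj'
        rw [← hLU k j' hkM hj']
        rw [Finset.sum_eq_single_of_mem k (Finset.mem_range.mpr hkM)]
        · rw [hLdiag k hkM, one_mul]
        · intro i _ hik
          rw [hLzero k i hkM (by rename_i h; exact Finset.mem_range.mp h)
            hik (by omega), zero_mul]
      rw [key j hjM, key (k + 4) hk4M, hH1, hH2]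
    · -- k ≥ 2 : two terms survive, use the induction hypothesis at k - 2
      obtain ⟨m, rfl⟩ : ∃ m, k = m + 2 := ⟨k - 2, by omega⟩
      set k := m + 2 with hk
      have hmM : m < M := by omega
      have key : ∀ j', j' < M →
          U k j' + L k m * U m j' = H k j' := by
        intro j' hj'
        rw [← hLU k j' hkM hj']
        have hsub : ({m, k} : Finset ℕ) ⊆ Finset.range M := by
          intro i hi
          simp only [Finset.mem_insert, Finset.mem_singleton] at hi
          rcases hi with rfl | rfl <;> simp [Finset.mem_range] <;> omega
        rw [← Finset.sum_subset hsub]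
        · rw [Finset.sum_pair (by omega : m ≠ k), hLdiag k hkM, one_mul]
          ring
        · intro i hi hni
          simp only [Finset.mem_insert, Finset.mem_singleton] at hni
          push_neg at hni
          rw [hLzero k i hkM (Finset.mem_range.mp hi) hni.2
            (by omega), zero_mul]
      have e1 := key j hjM
      have e2 := key (k + 4) hk4M
      have ih1 : U m j = U m (m + 4) :=
        ih m (by omega) j hmM hjM (by omega) (by omega)
      have ih2 : U m (k + 4) = U m (m + 4) :=
        ih m (by omega) (k + 4) hmM hk4M (by omega) (by omega)
      rw [hH1] at e1
      rw [hH2] at e2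
      rw [ih1] at e1
      rw [ih2] at e2
      linarith
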